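/- Let N ∼ 𝒩(0,1) and let h : ℝ → ℝ be twice continuously differentiable with ‖h''‖_∞ ≤ 1. Let f_h be the Stein solution associated with h. Then E[f_h'''(N)] = −(1/4) E[h(N) H₄(N)], where H₄(x) = x⁴ − 6x² + 3 is the fourth Hermite polynomial. -/

import Mathlib

open MeasureTheory ProbabilityTheory

/-- The expectation `E[h(N)]` of `h` under the standard Gaussian law. -/
noncomputable def gaussMean (h : ℝ → ℝ) : ℝ := ∫ z, h z ∂(gaussianReal 0 1)

/-- The Stein solution `f_h` associated with `h`. -/
noncomputable def steinSol (h : ℝ → ℝ) (x : ℝ) : ℝ :=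
  Real.exp (x ^ 2 / 2) * ∫ y in Set.Iic x, (h y - gaussMean h) * Real.exp (-y ^ 2 / 2)

section SteinAux

open Real Set
open scoped ENNReal NNReal

lemma stein_gauss_to_leb (F : ℝ → ℝ) :
    ∫ x, F x ∂(gaussianReal 0 1) = (√(2*π))⁻¹ * ∫ x, F x * rexp (-x^2/2) := by
  rw [gaussianReal_of_var_ne_zero 0 one_ne_zero, gaussianPDF_def]
  have : ∀ x:ℝ, ENNReal.ofReal (gaussianPDFReal 0 1 x)
      = ((gaussianPDFReal 0 1 x).toNNReal : ℝ≥0∞) := fun x => rfl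
  simp_rw [this]
  rw [integral_withDensity_eq_integral_smul
    ((measurable_gaussianPDFReal 0 1).real_toNNReal) F]
  rw [← integral_const_mul]
  congr 1; ext x
  have h0 := gaussianPDFReal_nonneg 0 1 x
  rw [NNReal.smul_def, smul_eq_mul, Real.coe_toNNReal _ h0, gaussianPDFReal]
  push_cast
  ring_nf

lemma stein_one_add_sq_le {ε : ℝ} (hε : 0 < ε) (hε1 : ε ≤ 1) (x : ℝ) :
    1 + x^2 ≤ ε⁻¹ * rexp (ε * x^2) := by
  have h := Real.add_one_le_exp (ε * x^2)
  have h2 : ε * (1 + x^2) ≤ rexp (ε * x^2) := by nlinarith [sq_nonneg x]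
  calc 1 + x^2 = ε⁻¹ * (ε * (1+x^2)) := by field_simp
  _ ≤ ε⁻¹ * rexp (ε * x^2) :=
      mul_le_mul_of_nonneg_left h2 (le_of_lt (inv_pos.mpr hε))

lemma stein_gauss_decay (k : ℕ) (b : ℝ) (hb : 1/16 + k/32 ≤ b) (x : ℝ) :
    (1+x^2)^k * rexp (-b*x^2) ≤ 32^k * rexp (-(1/16)*x^2) := by
  have h1 : (1+x^2)^k ≤ (32 * rexp (x^2/32))^k := by
    apply pow_le_pow_left₀ (by positivity)
    have := stein_one_add_sq_le (ε := 1/32) (by norm_num) (by norm_num) x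
    rw [show ((1:ℝ)/32)⁻¹ = 32 by norm_num] at this
    refine this.trans_eq ?_; congr 2; ring
  calc (1+x^2)^k * rexp (-b*x^2) ≤ (32 * rexp (x^2/32))^k * rexp (-b*x^2) :=
        mul_le_mul_of_nonneg_right h1 (le_of_lt (exp_pos _))
  _ = 32^k * (rexp (k * (x^2/32)) * rexp (-b*x^2)) := by
        rw [mul_pow, ← Real.exp_nat_mul]; ring
  _ = 32^k * rexp (k * (x^2/32) - b*x^2) := by rw [← Real.exp_add]; ring_nf
  _ ≤ 32^k * rexp (-(1/16)*x^2) := by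
        apply mul_le_mul_of_nonneg_left _ (by positivity)
        apply Real.exp_le_exp.mpr
        nlinarith [sq_nonneg x, mul_le_mul_of_nonneg_left hb (sq_nonneg x)]

lemma stein_integrable_poly_gauss {q : ℝ → ℝ} (hq : Continuous q) (c : ℝ) (k : ℕ) (b : ℝ)
    (hb : 1/16 + k/32 ≤ b) (h : ∀ x, |q x| ≤ c * ((1+x^2)^k * rexp (-b*x^2))) :
    Integrable q := by
  have hc : 0 ≤ c := by
    have h0 := (abs_nonneg (q 0)).trans (h 0)
    simp at h0
    nlinarith [exp_pos (-b*(0:ℝ)^2), h0]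
  apply Integrable.mono
    ((integrable_exp_neg_mul_sq (by norm_num : (0:ℝ) < 1/16)).const_mul (c * 32^k))
    hq.aestronglyMeasurable
  refine ae_of_all _ fun x => ?_
  rw [norm_eq_abs, norm_eq_abs]
  refine (h x).trans (le_trans ?_ (le_abs_self _))
  rw [mul_assoc]
  exact mul_le_mul_of_nonneg_left (stein_gauss_decay k b hb x) hc

lemma stein_expE_hasDeriv (x : ℝ) :
    HasDerivAt (fun y : ℝ => rexp (-y^2/2)) (-x * rexp (-x^2/2)) x := by
  have h : HasDerivAt (fun y : ℝ => -y^2/2) (-x) x := by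
    have := ((hasDerivAt_pow 2 x).neg).div_const 2
    refine this.congr_deriv ?_; push_cast; ring
  have := h.exp
  convert this using 1; ring

lemma stein_integrable_polyE {P : ℝ → ℝ} (hP : Continuous P) (c : ℝ) (k : ℕ)
    (h : ∀ x, |P x| ≤ c * (1+x^2)^k) (hk : (k:ℝ) ≤ 14) :
    Integrable (fun x => P x * rexp (-x^2/2)) := by
  apply stein_integrable_poly_gauss (by fun_prop) c k (1/2) (by norm_num; linarith)
  intro x
  rw [abs_mul, abs_exp, show -x^2/2 = -(1/2)*x^2 by ring, ← mul_assoc]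
  exact mul_le_mul_of_nonneg_right (h x) (le_of_lt (exp_pos _))

lemma stein_int_sq_E : ∫ x : ℝ, x^2 * rexp (-x^2/2) = ∫ x : ℝ, rexp (-x^2/2) := by
  have i1 : Integrable (fun x : ℝ => x * (-x * rexp (-x^2/2))) := by
    have e : (fun x : ℝ => x * (-x * rexp (-x^2/2))) = fun x => (-x^2) * rexp (-x^2/2) := by
      funext x; ring
    rw [e]
    apply stein_integrable_polyE (by continuity) 1 1 _ (by norm_num)
    intro x
    rw [abs_neg, abs_pow, sq_abs]
    nlinarith [sq_nonneg x]
  have i2 : Integrable (fun x : ℝ => (1:ℝ) * rexp (-x^2/2)) := by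
    apply stein_integrable_polyE continuous_const 1 0 (fun x => by norm_num) (by norm_num)
  have i3 : Integrable (fun x : ℝ => x * rexp (-x^2/2)) := by
    apply stein_integrable_polyE (by continuity : Continuous fun x : ℝ => x) 1 1 _ (by norm_num)
    intro x; nlinarith [abs_nonneg x, sq_abs x, sq_nonneg (1-|x|)]
  have key := integral_mul_deriv_eq_deriv_mul_of_integrable
    (u := fun x : ℝ => x) (v := fun x : ℝ => rexp (-x^2/2))
    (u' := fun _ => (1:ℝ)) (v' := fun x => -x * rexp (-x^2/2))
    (fun x _ => hasDerivAt_id x) (fun x _ => stein_expE_hasDeriv x) i1 i2 i3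
  have e1 : ∫ x : ℝ, x * (-x * rexp (-x^2/2)) = - ∫ x : ℝ, x^2 * rexp (-x^2/2) := by
    rw [← integral_neg]; congr 1; funext x; ring
  have e2 : ∫ x : ℝ, (1:ℝ) * rexp (-x^2/2) = ∫ x : ℝ, rexp (-x^2/2) := by
    congr 1; funext x; ring
  have key2 : ∫ x : ℝ, x * (-x * rexp (-x^2/2)) = -∫ x : ℝ, (1:ℝ) * rexp (-x^2/2) := key
  rw [e1, e2] at key2
  linarith

lemma stein_int_qu_E : ∫ x : ℝ, x^4 * rexp (-x^2/2) = 3 * ∫ x : ℝ, x^2 * rexp (-x^2/2) := by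
  have i1 : Integrable (fun x : ℝ => x^3 * (-x * rexp (-x^2/2))) := by
    have e : (fun x : ℝ => x^3 * (-x * rexp (-x^2/2))) = fun x => (-x^4) * rexp (-x^2/2) := by
      funext x; ring
    rw [e]
    apply stein_integrable_polyE (by continuity) 1 2 _ (by norm_num)
    intro x
    rw [abs_neg, abs_pow]
    nlinarith [sq_nonneg x, sq_nonneg (x^2), sq_abs x, abs_nonneg x, sq_nonneg (x^2-1)]
  have i2 : Integrable (fun x : ℝ => (3*x^2) * rexp (-x^2/2)) := by
    apply stein_integrable_polyE (by continuity) 3 1 _ (by norm_num)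
    intro x
    rw [abs_mul, abs_pow, sq_abs, abs_of_nonneg (by norm_num : (0:ℝ) ≤ 3)]
    nlinarith [sq_nonneg x]
  have i3 : Integrable (fun x : ℝ => x^3 * rexp (-x^2/2)) := by
    apply stein_integrable_polyE (by continuity) 1 2 _ (by norm_num)
    intro x
    rw [abs_pow]
    nlinarith [abs_nonneg x, sq_abs x, sq_nonneg (1-|x|), sq_nonneg (|x| * (1-|x|)), abs_nonneg x]
  have hu : ∀ x : ℝ, HasDerivAt (fun y : ℝ => y^3) (3*x^2) x := by
    intro x
    have := hasDerivAt_pow 3 x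
    refine this.congr_deriv ?_; norm_num
  have key := integral_mul_deriv_eq_deriv_mul_of_integrable
    (u := fun x : ℝ => x^3) (v := fun x : ℝ => rexp (-x^2/2))
    (u' := fun x => 3*x^2) (v' := fun x => -x * rexp (-x^2/2))
    (fun x _ => hu x) (fun x _ => stein_expE_hasDeriv x) i1 i2 i3
  have key2 : ∫ x : ℝ, x^3 * (-x * rexp (-x^2/2)) = -∫ x : ℝ, (3*x^2) * rexp (-x^2/2) := key
  have e1 : ∫ x : ℝ, x^3 * (-x * rexp (-x^2/2)) = -∫ x : ℝ, x^4 * rexp (-x^2/2) := by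
    rw [← integral_neg]; congr 1; funext x; ring
  have e2 : ∫ x : ℝ, (3*x^2) * rexp (-x^2/2) = 3 * ∫ x : ℝ, x^2 * rexp (-x^2/2) := by
    rw [← integral_const_mul]; congr 1; funext x; ring
  rw [e1, e2] at key2
  linarith

lemma stein_hasDerivAt_Iic_integral {w : ℝ → ℝ} (hw : Continuous w) (hwi : Integrable w) (x : ℝ) :
    HasDerivAt (fun t => ∫ y in Set.Iic t, w y) (w x) x := by
  have heq : (fun t => ∫ y in Set.Iic t, w y)
      = fun t => (∫ y in Set.Iic 0, w y) + ∫ y in (0:ℝ)..t, w y := by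
    funext t
    rw [← intervalIntegral.integral_Iic_sub_Iic hwi.integrableOn hwi.integrableOn]
    ring
  rw [heq]
  exact (intervalIntegral.integral_hasDerivAt_right
    hwi.intervalIntegrable (hw.stronglyMeasurableAtFilter _ _) hw.continuousAt).const_add _

lemma stein_h_facts {h : ℝ → ℝ} (hs : ContDiff ℝ 2 h) (hb : ∀ x, |deriv (deriv h) x| ≤ 1) :
    Differentiable ℝ h ∧ Differentiable ℝ (deriv h) ∧ Continuous (deriv (deriv h)) ∧
    (∀ x, |h x| ≤ (|h 0| + |deriv h 0| + 2) * (1+x^2)) ∧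
    (∀ x, |deriv h x| ≤ (|h 0| + |deriv h 0| + 2) * (1+x^2)) := by
  have h2 : ContDiff ℝ (1+1) h := by exact_mod_cast hs
  obtain ⟨hdiff, -, hcd⟩ := contDiff_succ_iff_deriv.mp h2
  obtain ⟨hdiff2, hcont2⟩ := contDiff_one_iff_deriv.mp hcd
  have hd1 : ∀ y, |deriv h y| ≤ |deriv h 0| + |y| := by
    intro y
    have := Convex.norm_image_sub_le_of_norm_deriv_le
      (s := (univ : Set ℝ)) (f := deriv h) (C := 1)
      (fun z _ => hdiff2 z) (fun z _ => by simpa using hb z) convex_univ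
      (mem_univ 0) (mem_univ y)
    simp only [norm_eq_abs, sub_zero, one_mul] at this
    have h2 := abs_sub_abs_le_abs_sub (deriv h y) (deriv h 0)
    linarith
  refine ⟨hdiff, hdiff2, hcont2, ?_, ?_⟩
  · intro x
    have key := Convex.norm_image_sub_le_of_norm_deriv_le
      (s := uIcc 0 x) (f := h) (C := |deriv h 0| + |x|)
      (fun z _ => hdiff z) (fun z hz => by
        have h1 := hd1 z
        have h2 : |z| ≤ |x| := by
          rcases mem_uIcc.mp hz with ⟨ha, hb'⟩ | ⟨ha, hb'⟩ <;>
            refine abs_le.mpr ⟨?_, ?_⟩ <;> nlinarith [le_abs_self x, neg_abs_le x]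
        simp only [norm_eq_abs]; linarith)
      (convex_uIcc 0 x) left_mem_uIcc right_mem_uIcc
    simp only [norm_eq_abs, sub_zero] at key
    have h3 := abs_sub_abs_le_abs_sub (h x) (h 0)
    nlinarith [abs_nonneg x, sq_abs x, abs_nonneg (deriv h 0), abs_nonneg (h 0), sq_nonneg (1-|x|)]
  · intro x
    have := hd1 x
    nlinarith [abs_nonneg x, sq_abs x, abs_nonneg (deriv h 0), abs_nonneg (h 0), sq_nonneg (1-|x|)]

lemma stein_G_bound {g : ℝ → ℝ} {C : ℝ} (hC0 : 0 ≤ C)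
    (hC : ∀ x, |g x| ≤ C * (1+x^2))
    (hzero : ∫ y, g y * rexp (-y^2/2) = 0)
    (hint : Integrable (fun y => g y * rexp (-y^2/2))) (x : ℝ) :
    |∫ y in Iic x, g y * rexp (-y^2/2)| ≤
      (4*C*∫ y : ℝ, rexp (-y^2/8)) * rexp (-x^2/8) := by
  have hpt : ∀ y : ℝ, |g y * rexp (-y^2/2)| ≤ 4*C * rexp (-y^2/4) := by
    intro y
    rw [abs_mul, abs_exp]
    have h1 := stein_one_add_sq_le (ε := 1/4) (by norm_num) (by norm_num) y
    have h2 : |g y| ≤ C * (4 * rexp (y^2/4)) := by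
      refine (hC y).trans ?_
      have := mul_le_mul_of_nonneg_left h1 hC0
      rw [show (1:ℝ)/4 * y^2 = y^2/4 by ring] at this
      refine this.trans (le_of_eq ?_)
      norm_num
    calc |g y| * rexp (-y^2/2) ≤ C * (4 * rexp (y^2/4)) * rexp (-y^2/2) :=
          mul_le_mul_of_nonneg_right h2 (le_of_lt (exp_pos _))
    _ = 4*C * (rexp (y^2/4) * rexp (-y^2/2)) := by ring
    _ = 4*C * rexp (y^2/4 + -y^2/2) := by rw [← Real.exp_add]
    _ = 4*C * rexp (-y^2/4) := by ring_nf
  have hE8 : Integrable (fun y : ℝ => rexp (-y^2/8)) := by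
    have := integrable_exp_neg_mul_sq (show (0:ℝ) < 1/8 by norm_num)
    convert this using 2; ring_nf
  have key : ∀ (s : Set ℝ), MeasurableSet s → (∀ y ∈ s, y^2 ≥ x^2) →
      |∫ y in s, g y * rexp (-y^2/2)| ≤ (4*C*∫ y : ℝ, rexp (-y^2/8)) * rexp (-x^2/8) := by
    intro s hms hs
    rw [← Real.norm_eq_abs]
    refine (norm_integral_le_integral_norm _).trans ?_
    have step1 : ∫ y in s, ‖g y * rexp (-y^2/2)‖ ≤
        ∫ y in s, (4*C * rexp (-x^2/8)) * rexp (-y^2/8) := by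
      apply setIntegral_mono_on
      · exact hint.norm.integrableOn
      · exact ((hE8.const_mul _).integrableOn)
      · exact hms
      · intro y hy
        rw [norm_eq_abs]
        refine (hpt y).trans ?_
        have : rexp (-y^2/4) = rexp (-y^2/8) * rexp (-y^2/8) := by
          rw [← Real.exp_add]; ring_nf
        rw [this]
        have h8 : rexp (-y^2/8) ≤ rexp (-x^2/8) := by
          apply Real.exp_le_exp.mpr; nlinarith [hs y hy]
        calc 4*C * (rexp (-y^2/8) * rexp (-y^2/8))
            ≤ 4*C * (rexp (-x^2/8) * rexp (-y^2/8)) := by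
              apply mul_le_mul_of_nonneg_left _ (by positivity)
              exact mul_le_mul_of_nonneg_right h8 (le_of_lt (exp_pos _))
        _ = (4*C * rexp (-x^2/8)) * rexp (-y^2/8) := by ring
    refine step1.trans ?_
    rw [integral_const_mul]
    have step2 : ∫ y in s, rexp (-y^2/8) ≤ ∫ y : ℝ, rexp (-y^2/8) :=
      setIntegral_le_integral hE8 (ae_of_all _ fun y => le_of_lt (exp_pos _))
    calc (4*C*rexp (-x^2/8)) * ∫ y in s, rexp (-y^2/8)
        ≤ (4*C*rexp (-x^2/8)) * ∫ y : ℝ, rexp (-y^2/8) :=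
          mul_le_mul_of_nonneg_left step2 (by positivity)
    _ = (4*C*∫ y : ℝ, rexp (-y^2/8)) * rexp (-x^2/8) := by ring
  rcases le_or_gt x 0 with hx | hx
  · exact key (Iic x) measurableSet_Iic (fun y hy => by
      rw [mem_Iic] at hy; nlinarith)
  · have hsplit : ∫ y in Iic x, g y * rexp (-y^2/2) =
        - ∫ y in Ioi x, g y * rexp (-y^2/2) := by
      have := intervalIntegral.integral_Iic_add_Ioi (b := x)
        hint.integrableOn hint.integrableOn
      rw [hzero] at this
      linarith
    rw [hsplit, abs_neg]
    exact key (Ioi x) measurableSet_Ioi (fun y hy => by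
      rw [mem_Ioi] at hy; nlinarith)

end SteinAux

set_option maxHeartbeats 2000000 in
/-- For `h` C² with `‖h''‖_∞ ≤ 1`, `E[f_h'''(N)] = -(1/4) E[h(N) H₄(N)]` where
`H₄(x) = x⁴ - 6x² + 3`. -/
theorem stein_third_deriv_mean (h : ℝ → ℝ) (hsmooth : ContDiff ℝ 2 h)
    (hbound : ∀ x, |deriv (deriv h) x| ≤ 1) :
    ∫ x, deriv (deriv (deriv (steinSol h))) x ∂(gaussianReal 0 1) =
      -(1 / 4) * ∫ x, h x * (x ^ 4 - 6 * x ^ 2 + 3) ∂(gaussianReal 0 1) := by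
  classical
  open Real Set in
  obtain ⟨hdiff, hdiff2, hcont2, hhb, hh'b⟩ := stein_h_facts hsmooth hbound
  set m : ℝ := gaussMean h with hm
  set g : ℝ → ℝ := fun x => h x - m with hgdef
  set C : ℝ := |h 0| + |deriv h 0| + 2 + |m| with hCdef
  have hC0 : (0:ℝ) ≤ C := by positivity
  have hgc : Continuous g := hdiff.continuous.sub continuous_const
  have hgb : ∀ x, |g x| ≤ C * (1+x^2) := by
    intro x
    have h1 := hhb x
    have h2 : |g x| ≤ |h x| + |m| := abs_sub _ _
    nlinarith [abs_nonneg m, sq_nonneg x]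
  have hgE_int : Integrable (fun x => g x * rexp (-x^2/2)) :=
    stein_integrable_polyE hgc C 1 (by simpa using hgb) (by norm_num)
  have hhE_int : Integrable (fun x => h x * rexp (-x^2/2)) := by
    refine stein_integrable_polyE hdiff.continuous C 1 (fun x => ?_) (by norm_num)
    have := hhb x
    have := abs_nonneg m
    simp only [pow_one]
    nlinarith [sq_nonneg x]
  have hE_int : Integrable (fun x : ℝ => rexp (-x^2/2)) := by
    have := stein_integrable_polyE (P := fun _ : ℝ => (1:ℝ)) continuous_const 1 0
      (fun x : ℝ => by norm_num) (by norm_num)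
    simpa using this
  have hsq : (0:ℝ) < √(2*π) := Real.sqrt_pos.mpr (by positivity)
  have hEval : ∫ x : ℝ, rexp (-x^2/2) = √(2*π) := by
    have h1 := integral_gaussian (1/2)
    rw [show √(π/(1/2)) = √(2*π) by rw [show π/(1/2) = 2*π by ring]] at h1
    rw [← h1]
    congr 1; funext x; congr 1; ring
  have hm_eq : m = (√(2*π))⁻¹ * ∫ x, h x * rexp (-x^2/2) := by
    rw [hm, gaussMean, stein_gauss_to_leb h]
  have hEzero : ∫ x, g x * rexp (-x^2/2) = 0 := by
    have hsplit : ∫ x, g x * rexp (-x^2/2)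
        = (∫ x, h x * rexp (-x^2/2)) - ∫ x, m * rexp (-x^2/2) := by
      rw [← integral_sub hhE_int (hE_int.const_mul m)]
      congr 1; funext x; simp only [hgdef]; ring
    rw [hsplit, integral_const_mul, hEval, hm_eq]
    field_simp
    ring
  set G : ℝ → ℝ := fun t => ∫ y in Iic t, g y * rexp (-y^2/2) with hGdef
  have hG : ∀ x, HasDerivAt G (g x * rexp (-x^2/2)) x :=
    fun x => stein_hasDerivAt_Iic_integral (by fun_prop) hgE_int x
  have hGc : Continuous G := by
    rw [continuous_iff_continuousAt]; exact fun x => (hG x).continuousAt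
  set K : ℝ := 4*C*∫ y : ℝ, rexp (-y^2/8) with hKdef
  have hK0 : (0:ℝ) ≤ K := by
    apply mul_nonneg (by positivity)
    exact integral_nonneg fun y => le_of_lt (exp_pos _)
  have hGb : ∀ x, |G x| ≤ K * rexp (-x^2/8) :=
    fun x => stein_G_bound hC0 hgb hEzero hgE_int x
  -- the Stein solution and its derivatives
  have hfeq : ∀ x, steinSol h x = rexp (x^2/2) * G x := by
    intro x
    rw [steinSol, hGdef]
  have hcancel : ∀ x : ℝ, rexp (x^2/2) * rexp (-x^2/2) = 1 := by
    intro x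
    rw [← Real.exp_add, show x^2/2 + -x^2/2 = 0 by ring, Real.exp_zero]
  have hfE : ∀ x, steinSol h x * rexp (-x^2/2) = G x := by
    intro x
    rw [hfeq x, mul_assoc, mul_comm (G x), ← mul_assoc, hcancel x, one_mul]
  have hexp : ∀ x : ℝ, HasDerivAt (fun y : ℝ => rexp (y^2/2)) (x * rexp (x^2/2)) x := by
    intro x
    have hq : HasDerivAt (fun y : ℝ => y^2/2) x x := by
      have := (hasDerivAt_pow 2 x).div_const 2
      refine this.congr_deriv ?_; push_cast; ring
    have := hq.exp
    convert this using 1; ring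
  have hgd : ∀ x, HasDerivAt g (deriv h x) x :=
    fun x => ((hdiff x).hasDerivAt).sub_const m
  have hfd : ∀ x, HasDerivAt (steinSol h) (x * steinSol h x + g x) x := by
    intro x
    have hd : HasDerivAt (fun y => rexp (y^2/2) * G y) (x * rexp (x^2/2) * G x + rexp (x^2/2) * (g x * rexp (-x^2/2))) x := (hexp x).mul (hG x)
    have heqf : (fun y => rexp (y^2/2) * G y) = steinSol h := by
      funext y; rw [hfeq y]
    rw [heqf] at hd
    convert hd using 1
    rw [hfeq x]
    have e2 : rexp (x^2/2) * (g x * rexp (-x^2/2))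
        = g x * (rexp (x^2/2) * rexp (-x^2/2)) := by ring
    rw [e2, hcancel x, mul_one]
    ring
  have hfd1 : ∀ x, HasDerivAt (fun y => y * steinSol h y + g y)
      ((1+x^2) * steinSol h x + x * g x + deriv h x) x := by
    intro x
    have := ((hasDerivAt_id x).mul (hfd x)).add (hgd x)
    refine this.congr_deriv ?_
    simp only [id_eq]
    ring
  have hfd2 : ∀ x, HasDerivAt (fun y => (1+y^2) * steinSol h y + y * g y + deriv h y)
      ((3*x+x^3) * steinSol h x + (2+x^2) * g x + x * deriv h x + deriv (deriv h) x) x := by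
    intro x
    have hpoly : HasDerivAt (fun y : ℝ => 1+y^2) (2*x) x := by
      have := (hasDerivAt_pow 2 x).const_add 1
      refine this.congr_deriv ?_; push_cast; ring
    have := ((hpoly.mul (hfd x)).add ((hasDerivAt_id x).mul (hgd x))).add
      ((hdiff2 x).hasDerivAt)
    refine this.congr_deriv ?_
    simp only [id_eq]
    ring
  have hd3 : deriv (deriv (deriv (steinSol h))) = fun x =>
      (3*x+x^3) * steinSol h x + (2+x^2) * g x + x * deriv h x + deriv (deriv h) x := by
    have e1 : deriv (steinSol h) = fun y => y * steinSol h y + g y :=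
      funext fun x => (hfd x).deriv
    have e2 : deriv (fun y => y * steinSol h y + g y)
        = fun y => (1+y^2) * steinSol h y + y * g y + deriv h y :=
      funext fun x => (hfd1 x).deriv
    have e3 : deriv (fun y => (1+y^2) * steinSol h y + y * g y + deriv h y) = fun x =>
        (3*x+x^3) * steinSol h x + (2+x^2) * g x + x * deriv h x + deriv (deriv h) x :=
      funext fun x => (hfd2 x).deriv
    rw [e1, e2, e3]
  -- integrability package
  have habs3 : ∀ x : ℝ, |3*x+x^3| ≤ 3*(1+x^2)^2 := by
    intro x
    refine abs_le.mpr ⟨?_, ?_⟩ <;>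
      nlinarith [sq_nonneg (x+1), sq_nonneg (x-1), sq_nonneg (x^2-1), sq_nonneg (x^2+x),
        sq_nonneg (x^2-x), sq_nonneg x, sq_nonneg (x^2+1)]
  have habsp : ∀ x : ℝ, |(3/2)*x^2+x^4/4| ≤ 2*(1+x^2)^2 := by
    intro x
    refine abs_le.mpr ⟨?_, ?_⟩ <;> nlinarith [sq_nonneg x, sq_nonneg (x^2)]
  have iA : Integrable (fun x => (3*x+x^3) * G x) := by
    refine stein_integrable_poly_gauss ((by fun_prop : Continuous fun x : ℝ => 3*x+x^3).mul hGc) (3*K) 2 (1/8) (by norm_num)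
      (fun x => ?_)
    rw [abs_mul]
    calc |3*x+x^3| * |G x| ≤ (3*(1+x^2)^2) * (K * rexp (-x^2/8)) :=
          mul_le_mul (habs3 x) (hGb x) (abs_nonneg _) (by positivity)
    _ = 3*K*((1+x^2)^2 * rexp (-(1/8)*x^2)) := by
          rw [show -(1/8)*x^2 = -x^2/8 by ring]; ring
  have iGp : Integrable (fun x => G x * ((3/2)*x^2+x^4/4)) := by
    refine stein_integrable_poly_gauss (hGc.mul (by fun_prop)) (2*K) 2 (1/8) (by norm_num)
      (fun x => ?_)
    rw [abs_mul]
    calc |G x| * |(3/2)*x^2+x^4/4| ≤ (K * rexp (-x^2/8)) * (2*(1+x^2)^2) :=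
          mul_le_mul (hGb x) (habsp x) (abs_nonneg _) (by positivity)
    _ = 2*K*((1+x^2)^2 * rexp (-(1/8)*x^2)) := by
          rw [show -(1/8)*x^2 = -x^2/8 by ring]; ring
  have iQ1 : Integrable (fun x => (((3/2)*x^2+x^4/4) * g x) * rexp (-x^2/2)) := by
    refine stein_integrable_polyE ((by fun_prop : Continuous fun x : ℝ => (3/2)*x^2+x^4/4).mul hgc) (2*C) 3 (fun x => ?_) (by norm_num)
    rw [abs_mul]
    calc |(3/2)*x^2+x^4/4| * |g x| ≤ (2*(1+x^2)^2) * (C*(1+x^2)) :=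
          mul_le_mul (habsp x) (hgb x) (abs_nonneg _) (by positivity)
    _ = 2*C*(1+x^2)^3 := by ring
  have iQ2 : Integrable (fun x => ((2+x^2)*g x) * rexp (-x^2/2)) := by
    refine stein_integrable_polyE ((by fun_prop : Continuous fun x : ℝ => 2+x^2).mul hgc) (2*C) 2 (fun x => ?_) (by norm_num)
    rw [abs_mul]
    have h1 : |2+x^2| ≤ 2*(1+x^2) := by
      rw [abs_of_nonneg (by positivity)]; nlinarith [sq_nonneg x]
    calc |2+x^2| * |g x| ≤ (2*(1+x^2)) * (C*(1+x^2)) :=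
          mul_le_mul h1 (hgb x) (abs_nonneg _) (by positivity)
    _ = 2*C*(1+x^2)^2 := by ring
  have iQ3 : Integrable (fun x => ((1-x^2)*g x) * rexp (-x^2/2)) := by
    refine stein_integrable_polyE ((by fun_prop : Continuous fun x : ℝ => 1-x^2).mul hgc) C 2 (fun x => ?_) (by norm_num)
    rw [abs_mul]
    have h1 : |1-x^2| ≤ (1+x^2) := by
      refine abs_le.mpr ⟨?_, ?_⟩ <;> nlinarith [sq_nonneg x]
    calc |1-x^2| * |g x| ≤ (1+x^2) * (C*(1+x^2)) :=
          mul_le_mul h1 (hgb x) (abs_nonneg _) (by positivity)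
    _ = C*(1+x^2)^2 := by ring
  have iQ4 : Integrable (fun x => (x*g x) * rexp (-x^2/2)) := by
    refine stein_integrable_polyE (continuous_id.mul hgc) C 2 (fun x => ?_) (by norm_num)
    rw [abs_mul]
    have h1 : |x| ≤ (1+x^2) := by
      nlinarith [sq_abs x, abs_nonneg x, sq_nonneg (1-|x|)]
    calc |x| * |g x| ≤ (1+x^2) * (C*(1+x^2)) :=
          mul_le_mul h1 (hgb x) (abs_nonneg _) (by positivity)
    _ = C*(1+x^2)^2 := by ring
  have habsx : ∀ x : ℝ, |x| ≤ (1+x^2) := by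
    intro x
    nlinarith [sq_abs x, abs_nonneg x, sq_nonneg (1-|x|)]
  have iC : Integrable (fun x => (x*deriv h x) * rexp (-x^2/2)) := by
    refine stein_integrable_polyE (continuous_id.mul hdiff2.continuous) C 2 (fun x => ?_) (by norm_num)
    rw [abs_mul]
    have h2 : |deriv h x| ≤ C * (1+x^2) := by
      have := hh'b x
      have := abs_nonneg m
      nlinarith [sq_nonneg x]
    calc |x| * |deriv h x| ≤ (1+x^2) * (C*(1+x^2)) :=
          mul_le_mul (habsx x) h2 (abs_nonneg _) (by positivity)
    _ = C*(1+x^2)^2 := by ring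
  have hh'C : ∀ x, |deriv h x| ≤ C * (1+x^2) := by
    intro x
    have := hh'b x
    have := abs_nonneg m
    nlinarith [sq_nonneg x]
  have iCn : Integrable (fun x => ((-x)*deriv h x) * rexp (-x^2/2)) := by
    refine stein_integrable_polyE (continuous_id.neg.mul hdiff2.continuous) C 2 (fun x => ?_) (by norm_num)
    rw [abs_mul, abs_neg]
    calc |x| * |deriv h x| ≤ (1+x^2) * (C*(1+x^2)) :=
          mul_le_mul (habsx x) (hh'C x) (abs_nonneg _) (by positivity)
    _ = C*(1+x^2)^2 := by ring
  have iD : Integrable (fun x => deriv (deriv h) x * rexp (-x^2/2)) := by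
    refine stein_integrable_polyE hcont2 1 0 (fun x => ?_) (by norm_num)
    simpa using hbound x
  have ih' : Integrable (fun x => deriv h x * rexp (-x^2/2)) :=
    stein_integrable_polyE hdiff2.continuous C 1 (by simpa using hh'C) (by norm_num)
  have ix2E : Integrable (fun x : ℝ => x^2 * rexp (-x^2/2)) := by
    refine stein_integrable_polyE (by fun_prop) 1 1 (fun x => ?_) (by norm_num)
    rw [abs_pow, sq_abs]
    nlinarith [sq_nonneg x]
  have ix4E : Integrable (fun x : ℝ => x^4 * rexp (-x^2/2)) := by
    refine stein_integrable_polyE (by fun_prop) 1 2 (fun x => ?_) (by norm_num)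
    rw [abs_pow]
    nlinarith [sq_abs x, sq_nonneg x, sq_nonneg (x^2), abs_nonneg x, sq_nonneg (x^2-1)]
  have iH1 : Integrable (fun x => ((x^4-6*x^2)*g x) * rexp (-x^2/2)) := by
    refine stein_integrable_polyE ((by fun_prop : Continuous fun x : ℝ => x^4-6*x^2).mul hgc)
      (6*C) 3 (fun x => ?_) (by norm_num)
    rw [abs_mul]
    have h1 : |x^4-6*x^2| ≤ 6*(1+x^2)^2 := by
      refine abs_le.mpr ⟨?_, ?_⟩ <;> nlinarith [sq_nonneg x, sq_nonneg (x^2), sq_nonneg (x^2-1)]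
    calc |x^4-6*x^2| * |g x| ≤ (6*(1+x^2)^2) * (C*(1+x^2)) :=
          mul_le_mul h1 (hgb x) (abs_nonneg _) (by positivity)
    _ = 6*C*(1+x^2)^3 := by ring
  have iH3 : Integrable (fun x : ℝ => (x^4-6*x^2+3) * rexp (-x^2/2)) := by
    refine stein_integrable_polyE (by fun_prop) 7 2 (fun x => ?_) (by norm_num)
    refine abs_le.mpr ⟨?_, ?_⟩ <;> nlinarith [sq_nonneg x, sq_nonneg (x^2), sq_nonneg (x^2-1)]
  -- integration by parts
  have hpderiv : ∀ x : ℝ, HasDerivAt (fun y : ℝ => (3/2)*y^2 + y^4/4) (3*x+x^3) x := by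
    intro x
    have h1 := ((hasDerivAt_pow 2 x).const_mul (3/2:ℝ)).add ((hasDerivAt_pow 4 x).div_const 4)
    refine h1.congr_deriv ?_
    push_cast; ring
  have iA' : Integrable (fun x => G x * (3*x+x^3)) := by
    have e : (fun x => (3*x+x^3) * G x) = fun x => G x * (3*x+x^3) := by funext x; ring
    exact e ▸ iA
  have iQ1' : Integrable (fun x => (g x * rexp (-x^2/2)) * ((3/2)*x^2+x^4/4)) := by
    have e : (fun x => (((3/2)*x^2+x^4/4) * g x) * rexp (-x^2/2))
        = fun x => (g x * rexp (-x^2/2)) * ((3/2)*x^2+x^4/4) := by funext x; ring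
    exact e ▸ iQ1
  have ibpA := integral_mul_deriv_eq_deriv_mul_of_integrable
    (u := G) (u' := fun x => g x * rexp (-x^2/2))
    (v := fun y : ℝ => (3/2)*y^2 + y^4/4) (v' := fun x => 3*x+x^3)
    (fun x _ => hG x) (fun x _ => hpderiv x) iA' iQ1' iGp
  have hvB : ∀ x : ℝ, HasDerivAt (fun y : ℝ => y * rexp (-y^2/2))
      ((1-x^2) * rexp (-x^2/2)) x := by
    intro x
    have := (hasDerivAt_id x).mul (stein_expE_hasDeriv x)
    refine this.congr_deriv ?_
    simp only [id_eq]; ring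
  have iQ3' : Integrable (fun x => g x * ((1-x^2) * rexp (-x^2/2))) := by
    have e : (fun x => ((1-x^2)*g x) * rexp (-x^2/2))
        = fun x => g x * ((1-x^2) * rexp (-x^2/2)) := by funext x; ring
    exact e ▸ iQ3
  have iC' : Integrable (fun x => deriv h x * (x * rexp (-x^2/2))) := by
    have e : (fun x => (x*deriv h x) * rexp (-x^2/2))
        = fun x => deriv h x * (x * rexp (-x^2/2)) := by funext x; ring
    exact e ▸ iC
  have iQ4' : Integrable (fun x => g x * (x * rexp (-x^2/2))) := by
    have e : (fun x => (x*g x) * rexp (-x^2/2))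
        = fun x => g x * (x * rexp (-x^2/2)) := by funext x; ring
    exact e ▸ iQ4
  have ibpB := integral_mul_deriv_eq_deriv_mul_of_integrable
    (u := g) (u' := fun x => deriv h x)
    (v := fun y : ℝ => y * rexp (-y^2/2)) (v' := fun x => (1-x^2) * rexp (-x^2/2))
    (fun x _ => hgd x) (fun x _ => hvB x) iQ3' iC' iQ4'
  have iCn' : Integrable (fun x => deriv h x * (-x * rexp (-x^2/2))) := by
    have e : (fun x => ((-x)*deriv h x) * rexp (-x^2/2))
        = fun x => deriv h x * (-x * rexp (-x^2/2)) := by funext x; ring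
    exact e ▸ iCn
  have ibpC := integral_mul_deriv_eq_deriv_mul_of_integrable
    (u := deriv h) (u' := deriv (deriv h))
    (v := fun y : ℝ => rexp (-y^2/2)) (v' := fun x => -x * rexp (-x^2/2))
    (fun x _ => (hdiff2 x).hasDerivAt) (fun x _ => stein_expE_hasDeriv x) iCn' iD ih'
  -- name the four basic integrals
  set Q1 : ℝ := ∫ x, (((3/2)*x^2+x^4/4) * g x) * rexp (-x^2/2) with hQ1
  set Q2 : ℝ := ∫ x, ((2+x^2)*g x) * rexp (-x^2/2) with hQ2
  set Q3 : ℝ := ∫ x, ((1-x^2)*g x) * rexp (-x^2/2) with hQ3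
  set Cc : ℝ := ∫ x, (x*deriv h x) * rexp (-x^2/2) with hCcdef
  set D : ℝ := ∫ x, deriv (deriv h) x * rexp (-x^2/2) with hDdef
  have hA : ∫ x, (3*x+x^3) * G x = -Q1 := by
    have e1 : ∫ x, (3*x+x^3) * G x = ∫ x, G x * (3*x+x^3) := by
      congr 1; funext x; ring
    have e2 : ∫ x, (g x * rexp (-x^2/2)) * ((3/2)*x^2+x^4/4) = Q1 := by
      rw [hQ1]; congr 1; funext x; ring
    rw [e1, ibpA, e2]
  have hCc : Cc = -Q3 := by
    have e1 : Cc = ∫ x, deriv h x * (x * rexp (-x^2/2)) := by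
      rw [hCcdef]; congr 1; funext x; ring
    have e2 : Q3 = ∫ x, g x * ((1-x^2) * rexp (-x^2/2)) := by
      rw [hQ3]; congr 1; funext x; ring
    rw [e1, e2]
    linarith [ibpB]
  have hD : D = -Q3 := by
    have e3 : ∫ x, deriv h x * (-x * rexp (-x^2/2))
        = -∫ x, deriv h x * (x * rexp (-x^2/2)) := by
      rw [← integral_neg]; congr 1; funext x; ring
    have e1 : Cc = ∫ x, deriv h x * (x * rexp (-x^2/2)) := by
      rw [hCcdef]; congr 1; funext x; ring
    rw [e3, ← e1] at ibpC
    rw [hCc] at ibpC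
    linarith [ibpC]
  -- split the integral of f₃·E
  have hsplit4 : ∫ x, ((3*x+x^3) * steinSol h x + (2+x^2) * g x + x * deriv h x
        + deriv (deriv h) x) * rexp (-x^2/2)
      = (∫ x, (3*x+x^3) * G x) + Q2 + Cc + D := by
    have e : (fun x => ((3*x+x^3) * steinSol h x + (2+x^2) * g x + x * deriv h x
          + deriv (deriv h) x) * rexp (-x^2/2))
        = fun x => (((3*x+x^3) * G x + ((2+x^2)*g x) * rexp (-x^2/2))
            + (x*deriv h x) * rexp (-x^2/2)) + deriv (deriv h) x * rexp (-x^2/2) := by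
      funext x
      rw [← hfE x]
      ring
    rw [e,
      integral_add (f := fun x => (3*x+x^3) * G x + ((2+x^2)*g x) * rexp (-x^2/2)
          + (x*deriv h x) * rexp (-x^2/2))
        (g := fun x => deriv (deriv h) x * rexp (-x^2/2)) ((iA.add iQ2).add iC) iD,
      integral_add (f := fun x => (3*x+x^3) * G x + ((2+x^2)*g x) * rexp (-x^2/2))
        (g := fun x => (x*deriv h x) * rexp (-x^2/2)) (iA.add iQ2) iC,
      integral_add (f := fun x => (3*x+x^3) * G x)
        (g := fun x => ((2+x^2)*g x) * rexp (-x^2/2)) iA iQ2, hQ2, hCcdef, hDdef]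
  -- Gaussian moments
  have hmom : ∫ x : ℝ, (x^4-6*x^2+3) * rexp (-x^2/2) = 0 := by
    have e : (fun x : ℝ => (x^4-6*x^2+3) * rexp (-x^2/2))
        = fun x => (x^4 * rexp (-x^2/2) - 6*(x^2 * rexp (-x^2/2))) + 3*rexp (-x^2/2) := by
      funext x; ring
    rw [e,
      integral_add (f := fun x => x^4*rexp (-x^2/2) - 6*(x^2*rexp (-x^2/2)))
        (g := fun x => 3*rexp (-x^2/2)) (ix4E.sub (ix2E.const_mul 6)) (hE_int.const_mul 3),
      integral_sub (f := fun x => x^4*rexp (-x^2/2)) (g := fun x => 6*(x^2*rexp (-x^2/2)))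
        ix4E (ix2E.const_mul 6),
      integral_const_mul, integral_const_mul, stein_int_qu_E, stein_int_sq_E]
    ring
  -- reduce H₄-integral of h to g
  have hH4 : ∫ x, (h x * (x^4-6*x^2+3)) * rexp (-x^2/2)
      = ∫ x, ((x^4-6*x^2)*g x) * rexp (-x^2/2) := by
    have e : (fun x => (h x * (x^4-6*x^2+3)) * rexp (-x^2/2))
        = fun x => (((x^4-6*x^2)*g x) * rexp (-x^2/2) + 3*(g x * rexp (-x^2/2)))
            + m*((x^4-6*x^2+3) * rexp (-x^2/2)) := by
      funext x
      simp only [hgdef]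
      ring
    rw [e,
      integral_add (f := fun x => ((x^4-6*x^2)*g x) * rexp (-x^2/2) + 3*(g x * rexp (-x^2/2)))
        (g := fun x => m*((x^4-6*x^2+3) * rexp (-x^2/2)))
        (iH1.add (hgE_int.const_mul 3)) (iH3.const_mul m),
      integral_add (f := fun x => ((x^4-6*x^2)*g x) * rexp (-x^2/2))
        (g := fun x => 3*(g x * rexp (-x^2/2))) iH1 (hgE_int.const_mul 3),
      integral_const_mul, integral_const_mul, hEzero, hmom]
    ring
  have hcomb : ∫ x, ((x^4-6*x^2)*g x) * rexp (-x^2/2) = 4*Q1 - 4*Q2 + 8*Q3 := by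
    have e : (fun x => ((x^4-6*x^2)*g x) * rexp (-x^2/2))
        = fun x => (4*((((3/2)*x^2+x^4/4)*g x) * rexp (-x^2/2))
            - 4*(((2+x^2)*g x) * rexp (-x^2/2))) + 8*(((1-x^2)*g x) * rexp (-x^2/2)) := by
      funext x; ring
    rw [e,
      integral_add (f := fun x => 4*((((3/2)*x^2+x^4/4)*g x) * rexp (-x^2/2))
          - 4*(((2+x^2)*g x) * rexp (-x^2/2)))
        (g := fun x => 8*(((1-x^2)*g x) * rexp (-x^2/2)))
        ((iQ1.const_mul 4).sub (iQ2.const_mul 4)) (iQ3.const_mul 8),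
      integral_sub (f := fun x => 4*((((3/2)*x^2+x^4/4)*g x) * rexp (-x^2/2)))
        (g := fun x => 4*(((2+x^2)*g x) * rexp (-x^2/2)))
        (iQ1.const_mul 4) (iQ2.const_mul 4), integral_const_mul,
      integral_const_mul, integral_const_mul, hQ1, hQ2, hQ3]
  -- final assembly
  rw [hd3, stein_gauss_to_leb, stein_gauss_to_leb]
  rw [hsplit4, hA, hCc, hD, hH4, hcomb]
  ring
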